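/- The function g(ν) := 1 − ν + ((1+b·p)·(ν − λ*) − a)·e^{p(ν−1)} satisfies g(μ*) = (1/p)·log((1+b·p)/(1+(b−a)·p)) − a/(1+b·p) and g(λ*) = (1/p)·log((1+b·p)/(1+(b−a)·p)) − a·(1+(b−a)·p)/(1+b·p); in particular g(μ*) > g(λ*), and if moreover Condition (I) holds, namely ((1+b·p)/(1+(b−a)·p))·log((1+b·p)/(1+(b−a)·p)) ≤ a·p, then g(λ*) ≤ 0. -/

import Mathlib

/-- `μ* = 1 + (1/p)·log(1/(1+b·p))`. -/
noncomputable def mustar (b p : ℝ) : ℝ := 1 + (1 / p) * Real.log (1 / (1 + b * p))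

/-- `λ* = 1 + (1/p)·log((1+(b−a)·p)/(1+b·p))`. -/
noncomputable def lamstar (a b p : ℝ) : ℝ :=
  1 + (1 / p) * Real.log ((1 + (b - a) * p) / (1 + b * p))

/-- The function `g(ν) := 1 − ν + ((1+b·p)·(ν − λ*) − a)·e^{p(ν−1)}`. -/
noncomputable def gfun (a b p nu : ℝ) : ℝ :=
  1 - nu + ((1 + b * p) * (nu - lamstar a b p) - a) * Real.exp (p * (nu - 1))

/-- values of `g` at `μ*` and `λ*`, the inequality `g(μ*) > g(λ*)`, and,
under Condition (I), `g(λ*) ≤ 0`. -/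
theorem stmt_17 (a b p : ℝ) (ha : 0 < a) (ha1 : a < 1) (hb : 1 < b) (hp : 0 < p) :
    gfun a b p (mustar b p)
        = (1 / p) * Real.log ((1 + b * p) / (1 + (b - a) * p)) - a / (1 + b * p) ∧
      gfun a b p (lamstar a b p)
        = (1 / p) * Real.log ((1 + b * p) / (1 + (b - a) * p))
            - a * (1 + (b - a) * p) / (1 + b * p) ∧
      gfun a b p (lamstar a b p) < gfun a b p (mustar b p) ∧
      ((1 + b * p) / (1 + (b - a) * p) * Real.log ((1 + b * p) / (1 + (b - a) * p)) ≤ a * p →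
        gfun a b p (lamstar a b p) ≤ 0) := by
  have hba : 0 < b - a := by linarith
  have hc : (0:ℝ) < 1 + b * p := by nlinarith
  have hd : (0:ℝ) < 1 + (b - a) * p := by nlinarith
  have hp' : p ≠ 0 := ne_of_gt hp
  have hexpM : Real.exp (p * (mustar b p - 1)) = 1 / (1 + b * p) := by
    have h : p * (mustar b p - 1) = Real.log (1 / (1 + b * p)) := by
      unfold mustar; field_simp; ring
    rw [h, Real.exp_log (by positivity)]
  have hexpL : Real.exp (p * (lamstar a b p - 1)) = (1 + (b - a) * p) / (1 + b * p) := by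
    have h : p * (lamstar a b p - 1) = Real.log ((1 + (b - a) * p) / (1 + b * p)) := by
      unfold lamstar; field_simp; ring
    rw [h, Real.exp_log (by positivity)]
  have hlog1 : Real.log (1 / (1 + b * p)) = - Real.log (1 + b * p) := by
    rw [Real.log_div one_ne_zero (ne_of_gt hc), Real.log_one]; ring
  have hlog2 : Real.log ((1 + (b - a) * p) / (1 + b * p)) =
      Real.log (1 + (b - a) * p) - Real.log (1 + b * p) :=
    Real.log_div (ne_of_gt hd) (ne_of_gt hc)
  have hlog3 : Real.log ((1 + b * p) / (1 + (b - a) * p)) =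
      Real.log (1 + b * p) - Real.log (1 + (b - a) * p) :=
    Real.log_div (ne_of_gt hc) (ne_of_gt hd)
  have hgM : gfun a b p (mustar b p)
      = (1 / p) * Real.log ((1 + b * p) / (1 + (b - a) * p)) - a / (1 + b * p) := by
    rw [gfun, hexpM]; unfold mustar lamstar
    rw [hlog1, hlog2, hlog3]
    field_simp
    ring
  have hgL : gfun a b p (lamstar a b p)
      = (1 / p) * Real.log ((1 + b * p) / (1 + (b - a) * p))
          - a * (1 + (b - a) * p) / (1 + b * p) := by
    rw [gfun, hexpL]; unfold lamstar
    rw [hlog2, hlog3]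
    field_simp
    ring
  refine ⟨hgM, hgL, ?_, ?_⟩
  · rw [hgM, hgL]
    have h : a / (1 + b * p) < a * (1 + (b - a) * p) / (1 + b * p) := by
      rw [div_lt_div_iff₀ hc hc]
      nlinarith [mul_pos (mul_pos ha hc) (mul_pos hba hp)]
    linarith
  · intro hI
    rw [hgL]
    rw [div_mul_eq_mul_div, div_le_iff₀ hd] at hI
    rw [sub_nonpos, one_div_mul_eq_div]
    have key : Real.log ((1 + b * p) / (1 + (b - a) * p)) / p
        ≤ a * (1 + (b - a) * p) / (1 + b * p) := by
      rw [div_le_div_iff₀ hp hc]; nlinarith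
    exact key
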